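/- Let F = G □ H be the Cartesian product of two finite, simple, connected, unweighted, undirected graphs G and H. Then the cover time of F satisfies COV[F] ≥ max{ (1 + δ_G/Δ_H)·COV[H], (1 + δ_H/Δ_G)·COV[G] }, where δ_Γ and Δ_Γ denote the minimum and maximum degree of a graph Γ. -/

import Mathlib

open Finset Filter Classical
open scoped ENNReal

noncomputable section

variable {V : Type*} [Fintype V] [DecidableEq V]

/-- Degree of a vertex in a simple graph. -/
def gdeg (G : SimpleGraph V) (u : V) : ℕ :=
  (Finset.univ.filter (fun v => G.Adj u v)).card

/-- Transition probabilities of the simple random walk on `G`. -/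
def srw (G : SimpleGraph V) (u v : V) : ℝ :=
  if G.Adj u v then ((gdeg G u : ℝ))⁻¹ else 0

/-- Probability weight of a trajectory under the transition kernel `P`. -/
def stepWeight (P : V → V → ℝ) {t : ℕ} (f : Fin (t + 1) → V) : ℝ :=
  ∏ i : Fin t, P (f i.castSucc) (f i.succ)

/-- Probability that the `t`-step trajectory of the chain `P` started at `u`
satisfies the predicate `A`. -/
def eventProb (P : V → V → ℝ) (u : V) (t : ℕ) (A : (Fin (t + 1) → V) → Prop) : ℝ :=
  ∑ f : Fin (t + 1) → V, if f 0 = u ∧ A f then stepWeight P f else 0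

/-- Expected hitting time `H[u,v]`, via `E[T] = ∑_t Pr(T > t)`. -/
def hitTime (P : V → V → ℝ) (u v : V) : ℝ≥0∞ :=
  ∑' t : ℕ, ENNReal.ofReal (eventProb P u t (fun f => ∀ i, f i ≠ v))

/-- Expected cover time starting from `u`. -/
def coverTimeFrom (P : V → V → ℝ) (u : V) : ℝ≥0∞ :=
  ∑' t : ℕ, ENNReal.ofReal (eventProb P u t (fun f => ∃ v, ∀ i, f i ≠ v))

/-- The cover time `COV`: maximum over starting vertices of the expected cover time. -/
def coverTime (P : V → V → ℝ) : ℝ≥0∞ := ⨆ u, coverTimeFrom P u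

/-- Stationary probability of `v` for the simple random walk: `d(v)/(2|E|)`. -/
def statPi (G : SimpleGraph V) (v : V) : ℝ := (gdeg G v : ℝ) / (∑ u, (gdeg G u : ℝ))

/-- Number of visits to `w` in a trajectory. -/
def visits {t : ℕ} (f : Fin (t + 1) → V) (w : V) : ℕ :=
  (Finset.univ.filter (fun i => f i = w)).card

/-- The blanket-cover time `BCOV[G]`. -/
def blanketCoverTime (G : SimpleGraph V) : ℝ≥0∞ :=
  ⨆ u, ∑' t : ℕ, ENNReal.ofReal (eventProb (srw G) u t
    (fun f => ∃ w, (visits f w : ℝ≥0∞) < ENNReal.ofReal (statPi G w) * coverTime (srw G)))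

/-- Minimum degree. -/
def minDeg (G : SimpleGraph V) : ℕ := sInf (Set.range (gdeg G))

/-- Maximum degree. -/
def maxDeg (G : SimpleGraph V) : ℕ := Finset.univ.sup (gdeg G)

/-- Number of edges (by the handshaking lemma). -/
def edgeCount (G : SimpleGraph V) : ℕ := (∑ v, gdeg G v) / 2

/-- Diameter. -/
def gdiam (G : SimpleGraph V) : ℕ := Finset.univ.sup (fun p : V × V => G.dist p.1 p.2)

/-- Effective resistance between `u` and `v`, all edges having unit resistance:
the reciprocal of the effective conductance, the latter given by the Dirichlet
variational principle. -/
def effRes (G : SimpleGraph V) (u v : V) : ℝ :=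
  (sInf {e : ℝ | ∃ f : V → ℝ, f u = 1 ∧ f v = 0 ∧
      e = (∑ x, ∑ y, if G.Adj x y then (f x - f y) ^ 2 else 0) / 2})⁻¹

/-- Maximum effective resistance over pairs of vertices. -/
def Rmax (G : SimpleGraph V) : ℝ := sSup {r : ℝ | ∃ u v, r = effRes G u v}

end

set_option linter.unusedSectionVars false
set_option linter.unusedVariables false
noncomputable section CoverAux
open Finset Classical
open scoped ENNReal

variable {V W : Type*} [Fintype V] [DecidableEq V] [Fintype W] [DecidableEq W]

lemma srw_nonneg (G : SimpleGraph V) (u v : V) : 0 ≤ srw G u v := by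
  unfold srw; split <;> positivity

lemma stepWeight_nonneg {P : V → V → ℝ} (hP : ∀ u v, 0 ≤ P u v) {t : ℕ}
    (f : Fin (t + 1) → V) : 0 ≤ stepWeight P f :=
  Finset.prod_nonneg fun i _ => hP _ _

lemma eventProb_nonneg {P : V → V → ℝ} (hP : ∀ u v, 0 ≤ P u v) {u : V} {t : ℕ}
    {A : (Fin (t + 1) → V) → Prop} : 0 ≤ eventProb P u t A := by
  refine Finset.sum_nonneg fun f _ => ?_
  split
  · exact stepWeight_nonneg hP f
  · exact le_rfl

lemma eventProb_mono {P : V → V → ℝ} (hP : ∀ u v, 0 ≤ P u v) {u : V} {t : ℕ}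
    {A A' : (Fin (t + 1) → V) → Prop} (h : ∀ f, A f → A' f) :
    eventProb P u t A ≤ eventProb P u t A' := by
  refine Finset.sum_le_sum fun f _ => ?_
  by_cases hf : f 0 = u ∧ A f
  · rw [if_pos hf, if_pos ⟨hf.1, h f hf.2⟩]
  · rw [if_neg hf]
    split
    · exact stepWeight_nonneg hP f
    · exact le_rfl

lemma eventProb_congr {P : V → V → ℝ} {u : V} {t : ℕ}
    {A A' : (Fin (t + 1) → V) → Prop} (h : ∀ f, A f ↔ A' f) :
    eventProb P u t A = eventProb P u t A' := by
  refine Finset.sum_congr rfl fun f _ => ?_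
  have : (f 0 = u ∧ A f) ↔ (f 0 = u ∧ A' f) := and_congr_right fun _ => h f
  exact if_congr this rfl rfl

end CoverAux
set_option linter.unusedSectionVars false
set_option linter.unusedVariables false
set_option maxHeartbeats 1000000
noncomputable section CoverAux2
open Finset Classical
open scoped ENNReal

variable {V W : Type*} [Fintype V] [DecidableEq V] [Fintype W] [DecidableEq W]

lemma stepWeight_cons (P : V → V → ℝ) {t : ℕ} (v : V) (g : Fin (t + 1) → V) :
    stepWeight P (Fin.cons v g) = P v (g 0) * stepWeight P g := by
  unfold stepWeight
  rw [Fin.prod_univ_succ]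
  congr 1

/-- One-step decomposition of the avoidance event probability. -/
lemma eventProb_succ_step (P : V → V → ℝ) (ϕ : V → W) (u : V) (t : ℕ) (L : Finset W) :
    eventProb P u (t + 1) (fun f => ∃ w ∈ L, ∀ i, ϕ (f i) ≠ w)
      = ∑ v, P u v * eventProb P v t
          (fun g => ∃ w ∈ L.erase (ϕ u), ∀ i, ϕ (g i) ≠ w) := by
  have hiff : ∀ (g : Fin (t+1) → V),
      (∃ w ∈ L, ∀ i, ϕ ((Fin.cons u g : Fin (t+2) → V) i) ≠ w)
        ↔ (∃ w ∈ L.erase (ϕ u), ∀ i, ϕ (g i) ≠ w) := by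
    intro g
    constructor
    · rintro ⟨w, hw, hall⟩
      have h0' := hall 0
      refine ⟨w, Finset.mem_erase.2 ⟨?_, hw⟩, fun i => ?_⟩
      · exact fun hc => h0' (by simpa using hc.symm)
      · simpa [Fin.cons_succ] using hall i.succ
    · rintro ⟨w, hw, hall⟩
      rcases Finset.mem_erase.1 hw with ⟨hne, hwL⟩
      refine ⟨w, hwL, ?_⟩
      rw [Fin.forall_fin_succ]
      exact ⟨by simpa using hne.symm, fun i => by simpa [Fin.cons_succ] using hall i⟩
  trans (∑ g : Fin (t+1) → V,
      if (∃ w ∈ L.erase (ϕ u), ∀ i, ϕ (g i) ≠ w) then P u (g 0) * stepWeight P g else 0)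
  · unfold eventProb
    rw [← Equiv.sum_comp (Fin.consEquiv (fun _ : Fin (t+2) => V)), Fintype.sum_prod_type]
    beta_reduce
    have collapse : ∀ (F : V → ℝ) (a : V), (∑ v, if v = a then F v else 0) = F a := by
      intro F a
      rw [Finset.sum_ite_eq' Finset.univ a F]
      exact if_pos (Finset.mem_univ a)
    refine Eq.trans (Finset.sum_congr rfl fun v _ => ?_) (collapse (fun _ =>
      (∑ g : Fin (t+1) → V,
        if (∃ w ∈ L.erase (ϕ u), ∀ i, ϕ (g i) ≠ w) then P u (g 0) * stepWeight P g else 0)) u)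
    by_cases hv : v = u
    · rw [if_pos hv]
      subst hv
      refine Finset.sum_congr rfl fun g _ => ?_
      by_cases hA : (∃ w ∈ L.erase (ϕ v), ∀ i, ϕ (g i) ≠ w)
      · rw [if_pos ⟨rfl, (hiff g).mpr hA⟩, if_pos hA]
        exact stepWeight_cons P v g
      · rw [if_neg ?_, if_neg hA]
        rintro ⟨-, hc⟩
        exact hA ((hiff g).mp hc)
    · rw [if_neg hv]
      refine Finset.sum_eq_zero fun g _ => ?_
      refine if_neg ?_
      rintro ⟨hc, -⟩
      exact hv hc
  · unfold eventProb
    simp only [Finset.mul_sum, mul_ite, mul_zero]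
    rw [Finset.sum_comm]
    refine Finset.sum_congr rfl fun g _ => Eq.symm ?_
    by_cases hA : (∃ w ∈ L.erase (ϕ u), ∀ i, ϕ (g i) ≠ w)
    · rw [Finset.sum_eq_single (g 0) (fun v _ hv => if_neg (fun hc => hv hc.1.symm))
        (fun h => absurd (Finset.mem_univ _) h), if_pos ⟨rfl, hA⟩, if_pos hA]
    · rw [if_neg hA]
      exact Finset.sum_eq_zero fun v _ => if_neg fun hc => hA hc.2

/-- If every element of `L` is already hit by the start, the avoidance event is impossible. -/
lemma eventProb_erase_empty (P : V → V → ℝ) (ϕ : V → W) (u : V) (t : ℕ) (L : Finset W)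
    (h : L.erase (ϕ u) = ∅) :
    eventProb P u t (fun f => ∃ w ∈ L, ∀ i, ϕ (f i) ≠ w) = 0 := by
  refine Finset.sum_eq_zero fun f _ => ?_
  refine if_neg ?_
  rintro ⟨h0, w, hw, hall⟩
  have : w ∈ L.erase (ϕ u) :=
    Finset.mem_erase.2 ⟨fun hc => hall 0 (by rw [h0, hc]), hw⟩
  rw [h] at this
  exact absurd this (Finset.notMem_empty w)

/-- The zero-step avoidance probability. -/
lemma eventProb_zero_step (P : V → V → ℝ) (ϕ : V → W) (u : V) (L : Finset W)
    (h : L.erase (ϕ u) ≠ ∅) :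
    eventProb P u 0 (fun f => ∃ w ∈ L, ∀ i, ϕ (f i) ≠ w) = 1 := by
  unfold eventProb
  rw [← Equiv.sum_comp (Equiv.funUnique (Fin 1) V).symm]
  beta_reduce
  have collapse : ∀ (F : V → ℝ) (a : V), (∑ v, if v = a then F v else 0) = F a := by
    intro F a
    rw [Finset.sum_ite_eq' Finset.univ a F]
    exact if_pos (Finset.mem_univ a)
  rcases Finset.nonempty_of_ne_empty h with ⟨w, hw⟩
  rcases Finset.mem_erase.1 hw with ⟨hne, hwL⟩
  refine Eq.trans (Finset.sum_congr rfl fun v _ => ?_) (collapse (fun _ => (1:ℝ)) u)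
  by_cases hv : v = u
  · subst hv
    rw [if_pos rfl, if_pos ?_]
    · unfold stepWeight
      exact Fin.prod_univ_zero _
    · exact ⟨rfl, ⟨w, hwL, fun i => fun hc => hne (hc ▸ rfl)⟩⟩
  · rw [if_neg hv, if_neg ?_]
    rintro ⟨hc, -⟩
    exact hv hc

end CoverAux2
set_option linter.unusedSectionVars false
set_option linter.unusedVariables false
set_option maxHeartbeats 1000000
noncomputable section CoverAux3
open Finset Classical
open scoped ENNReal

variable {V W : Type*} [Fintype V] [DecidableEq V] [Fintype W] [DecidableEq W]

/-- Expected time until the `ϕ`-projection of the walk has visited every element of `L`. -/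
def covD (P : V → V → ℝ) (ϕ : V → W) (u : V) (L : Finset W) : ℝ≥0∞ :=
  ∑' t : ℕ, ENNReal.ofReal (eventProb P u t (fun f => ∃ w ∈ L, ∀ i, ϕ (f i) ≠ w))

lemma covD_empty (P : V → V → ℝ) (ϕ : V → W) (u : V) (L : Finset W)
    (h : L.erase (ϕ u) = ∅) : covD P ϕ u L = 0 := by
  unfold covD
  simp [eventProb_erase_empty P ϕ _ _ _ h]

lemma covD_rec (P : V → V → ℝ) (hP : ∀ u v, 0 ≤ P u v) (ϕ : V → W) (u : V) (L : Finset W)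
    (h : L.erase (ϕ u) ≠ ∅) :
    covD P ϕ u L = 1 + ∑ v, ENNReal.ofReal (P u v) * covD P ϕ v (L.erase (ϕ u)) := by
  unfold covD
  rw [tsum_eq_zero_add' ENNReal.summable]
  congr 1
  · rw [eventProb_zero_step P ϕ u L h]
    exact ENNReal.ofReal_one
  · have hterm : ∀ t : ℕ,
        ENNReal.ofReal (eventProb P u (t + 1) (fun f => ∃ w ∈ L, ∀ i, ϕ (f i) ≠ w))
          = ∑ v, ENNReal.ofReal (P u v) *
              ENNReal.ofReal (eventProb P v t (fun g => ∃ w ∈ L.erase (ϕ u), ∀ i, ϕ (g i) ≠ w)) := by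
      intro t
      rw [eventProb_succ_step P ϕ u t L,
        ENNReal.ofReal_sum_of_nonneg (fun v _ => mul_nonneg (hP u v) (eventProb_nonneg hP))]
      exact Finset.sum_congr rfl fun v _ => ENNReal.ofReal_mul (hP u v)
    rw [tsum_congr hterm, Summable.tsum_finsetSum (fun v _ => ENNReal.summable)]
    exact Finset.sum_congr rfl fun v _ => ENNReal.tsum_mul_left

/-- Truncated expected cover-of-`L` time for the simple random walk on `H`,
counted in number of steps, truncated at `T` steps. -/
def ET {Vh : Type*} [Fintype Vh] [DecidableEq Vh] (H : SimpleGraph Vh) :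
    ℕ → Vh → Finset Vh → ℝ≥0∞
  | 0, _, _ => 0
  | (T+1), y, L => if L.erase y = ∅ then 0
      else 1 + ∑ y', ENNReal.ofReal (srw H y y') * ET H T y' (L.erase y)

lemma ET_eq_partial_sum {Vh : Type*} [Fintype Vh] [DecidableEq Vh] (H : SimpleGraph Vh)
    (T : ℕ) : ∀ (y : Vh) (L : Finset Vh),
    ET H T y L = ∑ t ∈ Finset.range T,
      ENNReal.ofReal (eventProb (srw H) y t (fun f => ∃ w ∈ L, ∀ i : Fin (t+1), f i ≠ w)) := by
  induction T with
  | zero => intro y L; simp [ET]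
  | succ T ih =>
    intro y L
    rw [Finset.sum_range_succ']
    by_cases h : L.erase y = ∅
    · have hz : ∀ t : ℕ,
          eventProb (srw H) y t (fun f => ∃ w ∈ L, ∀ i : Fin (t+1), f i ≠ w) = 0 := by
        intro t
        exact eventProb_erase_empty (srw H) id y t L h
      simp only [ET, if_pos h]
      rw [Finset.sum_congr rfl fun t _ => by rw [hz (t+1)], hz 0]
      simp
    · simp only [ET, if_neg h]
      have h0 : ENNReal.ofReal
          (eventProb (srw H) y 0 (fun f => ∃ w ∈ L, ∀ i : Fin 1, f i ≠ w)) = 1 := by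
        have := eventProb_zero_step (srw H) id y L h
        simp only [id_eq] at this
        rw [this, ENNReal.ofReal_one]
      rw [h0]
      rw [add_comm (∑ t ∈ Finset.range T, _) 1]
      congr 1
      have hstep : ∀ t : ℕ,
          ENNReal.ofReal (eventProb (srw H) y (t+1) (fun f => ∃ w ∈ L, ∀ i : Fin (t+2), f i ≠ w))
            = ∑ y', ENNReal.ofReal (srw H y y') *
                ENNReal.ofReal (eventProb (srw H) y' t
                  (fun g => ∃ w ∈ L.erase y, ∀ i : Fin (t+1), g i ≠ w)) := by
        intro t
        have hss := eventProb_succ_step (srw H) id y t L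
        simp only [id_eq] at hss
        rw [hss,
          ENNReal.ofReal_sum_of_nonneg (fun v _ => mul_nonneg (srw_nonneg H y v)
            (eventProb_nonneg (srw_nonneg H)))]
        exact Finset.sum_congr rfl fun v _ => ENNReal.ofReal_mul (srw_nonneg H y v)
      rw [Finset.sum_congr rfl fun t _ => hstep t, Finset.sum_comm]
      refine Finset.sum_congr rfl fun y' _ => ?_
      rw [← Finset.mul_sum, ih y' (L.erase y)]

lemma covD_id_eq_iSup_ET {Vh : Type*} [Fintype Vh] [DecidableEq Vh] (H : SimpleGraph Vh)
    (y : Vh) (L : Finset Vh) :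
    covD (srw H) id y L = ⨆ T, ET H T y L := by
  unfold covD
  rw [ENNReal.tsum_eq_iSup_nat]
  exact iSup_congr fun T => (ET_eq_partial_sum H T y L).symm

end CoverAux3
set_option linter.unusedSectionVars false
set_option linter.unusedVariables false
set_option maxHeartbeats 1000000
noncomputable section CoverAux4
open Finset Classical
open scoped ENNReal

variable {Vg Vh : Type*} [Fintype Vg] [DecidableEq Vg] [Fintype Vh] [DecidableEq Vh]

lemma gdeg_boxProd (G : SimpleGraph Vg) (H : SimpleGraph Vh) (a : Vg) (x : Vh) :
    gdeg (G.boxProd H) (a, x) = gdeg G a + gdeg H x := by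
  unfold gdeg
  have hset : (Finset.univ.filter (fun q : Vg × Vh => (G.boxProd H).Adj (a, x) q))
      = (Finset.univ.filter (fun b => G.Adj a b)).image (fun b => (b, x))
        ∪ (Finset.univ.filter (fun y => H.Adj x y)).image (fun y => (a, y)) := by
    ext q
    simp only [Finset.mem_filter, Finset.mem_univ, true_and, Finset.mem_union,
      Finset.mem_image, SimpleGraph.boxProd_adj]
    constructor
    · rintro (⟨hadj, heq⟩ | ⟨hadj, heq⟩)
      · exact Or.inl ⟨q.1, hadj, by rw [heq]⟩
      · exact Or.inr ⟨q.2, hadj, by rw [heq]⟩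
    · rintro (⟨b, hb, hq⟩ | ⟨y, hy, hq⟩)
      · subst hq; exact Or.inl ⟨hb, rfl⟩
      · subst hq; exact Or.inr ⟨hy, rfl⟩
  rw [hset, Finset.card_union_of_disjoint, Finset.card_image_of_injective _
    (fun b c h => congrArg Prod.fst h),
    Finset.card_image_of_injective _ (fun b c h => congrArg Prod.snd h)]
  · rw [Finset.disjoint_left]
    rintro q hq1 hq2
    simp only [Finset.mem_image, Finset.mem_filter] at hq1 hq2
    rcases hq1 with ⟨b, ⟨-, hb⟩, rfl⟩
    rcases hq2 with ⟨y, ⟨-, hy⟩, heq⟩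
    have hab : a = b := congrArg Prod.fst heq
    subst hab
    exact G.irrefl hb

lemma minDeg_le_gdeg (G : SimpleGraph Vg) (a : Vg) : minDeg G ≤ gdeg G a :=
  Nat.sInf_le ⟨a, rfl⟩

lemma gdeg_le_maxDeg (G : SimpleGraph Vg) (a : Vg) : gdeg G a ≤ maxDeg G :=
  Finset.le_sup (Finset.mem_univ a)

lemma gdeg_pos_of_exists_ne (H : SimpleGraph Vh) (hH : H.Connected) {y y' : Vh}
    (hne : y' ≠ y) : 0 < gdeg H y := by
  have hr : H.Reachable y y' := hH.preconnected y y'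
  rcases hr with ⟨p⟩
  have hb : ∃ b, H.Adj y b := by
    cases p with
    | nil => exact absurd rfl hne
    | cons hadj p' => exact ⟨_, hadj⟩
  rcases hb with ⟨b, hadj⟩
  unfold gdeg
  rw [Finset.card_pos]
  exact ⟨b, Finset.mem_filter.2 ⟨Finset.mem_univ b, hadj⟩⟩

end CoverAux4
set_option linter.unusedSectionVars false
set_option linter.unusedVariables false
set_option maxHeartbeats 2000000
noncomputable section CoverAux5
open Finset Classical
open scoped ENNReal

variable {Vg Vh : Type*} [Fintype Vg] [DecidableEq Vg] [Fintype Vh] [DecidableEq Vh]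

lemma srw_row_le_one (H : SimpleGraph Vh) (y : Vh) :
    ∑ y', ENNReal.ofReal (srw H y y') ≤ 1 := by
  have hterm : ∀ y', ENNReal.ofReal (srw H y y')
      = if H.Adj y y' then ((gdeg H y : ℝ≥0∞))⁻¹ else 0 := by
    intro y'
    unfold srw
    split
    · rename_i hadj
      have hpos : 0 < gdeg H y := by
        unfold gdeg
        rw [Finset.card_pos]
        exact ⟨y', Finset.mem_filter.2 ⟨Finset.mem_univ _, hadj⟩⟩
      rw [ENNReal.ofReal_inv_of_pos (by exact_mod_cast hpos), ENNReal.ofReal_natCast]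
    · simp
  rw [Finset.sum_congr rfl fun y' _ => hterm y', ← Finset.sum_filter]
  rw [Finset.sum_const, nsmul_eq_mul]
  by_cases h0 : gdeg H y = 0
  · unfold gdeg at h0 ⊢
    rw [h0]
    simp
  · have : ((Finset.univ.filter (fun y' => H.Adj y y')).card : ℝ≥0∞) = (gdeg H y : ℝ≥0∞) := by
      unfold gdeg; norm_num
    rw [this, ENNReal.mul_inv_cancel (by exact_mod_cast h0) (ENNReal.natCast_ne_top _)]

lemma ET_le (H : SimpleGraph Vh) : ∀ (T : ℕ) (y : Vh) (L : Finset Vh), ET H T y L ≤ T := by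
  intro T
  induction T with
  | zero => intro y L; simp [ET]
  | succ T ih =>
    intro y L
    rw [ET]
    split
    · exact zero_le
    · calc 1 + ∑ y', ENNReal.ofReal (srw H y y') * ET H T y' (L.erase y)
          ≤ 1 + ∑ y', ENNReal.ofReal (srw H y y') * T := by
            exact add_le_add_right (Finset.sum_le_sum fun y' _ =>
              mul_le_mul_right (ih y' (L.erase y)) _) 1
        _ ≤ 1 + (T : ℝ≥0∞) := by
            rw [← Finset.sum_mul]
            exact add_le_add_right (mul_le_of_le_one_left zero_le (srw_row_le_one H y)) 1
        _ = ((T + 1 : ℕ) : ℝ≥0∞) := by push_cast; ring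

/-- Main induction: each truncated cover bound for `H` lower-bounds the cover quantity
for the product walk, with the slowdown factor. -/
lemma main_ind (G : SimpleGraph Vg) (H : SimpleGraph Vh)
    (hG : G.Connected) (hH : H.Connected) :
    ∀ (T : ℕ) (L : Finset Vh) (y : Vh) (x : Vg),
    (1 + (minDeg G : ℝ≥0∞) / (maxDeg H : ℝ≥0∞)) * ET H T y L
      ≤ covD (srw (G.boxProd H)) Prod.snd (x, y) L := by
  set c : ℝ≥0∞ := 1 + (minDeg G : ℝ≥0∞) / (maxDeg H : ℝ≥0∞) with hc
  intro T
  induction T with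
  | zero => intro L y x; simp [ET]
  | succ T ih =>
    intro L y x
    by_cases hL : L.erase y = ∅
    · rw [ET, if_pos hL, mul_zero]
      exact zero_le
    · have : Nonempty Vg := hG.nonempty
      set P2 : (Vg × Vh) → (Vg × Vh) → ℝ := srw (G.boxProd H) with hP2
      set L' : Finset Vh := L.erase y with hL'
      -- basic degree facts
      obtain ⟨w₀, hw₀⟩ := Finset.nonempty_of_ne_empty hL
      have hw₀ne : w₀ ≠ y := (Finset.mem_erase.1 hw₀).1
      have hdH : 0 < gdeg H y := gdeg_pos_of_exists_ne H hH hw₀ne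
      have hBne : (gdeg H y : ℝ≥0∞) ≠ 0 := by exact_mod_cast hdH.ne'
      have hBnt : (gdeg H y : ℝ≥0∞) ≠ ⊤ := ENNReal.natCast_ne_top _
      -- recursions
      have hrecL' : ∀ x' : Vg, covD P2 Prod.snd (x', y) L'
          = 1 + ∑ q, ENNReal.ofReal (P2 (x', y) q) * covD P2 Prod.snd q L' := by
        intro x'
        have h1 : L'.erase ((x', y).2) ≠ ∅ := by
          rw [hL', Finset.erase_idem]
          exact hL
        have := covD_rec P2 (fun u v => srw_nonneg _ u v) Prod.snd (x', y) L' h1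
        rw [this, hL', Finset.erase_idem]
      have hrecL : ∀ x' : Vg, covD P2 Prod.snd (x', y) L
          = 1 + ∑ q, ENNReal.ofReal (P2 (x', y) q) * covD P2 Prod.snd q L' := by
        intro x'
        exact covD_rec P2 (fun u v => srw_nonneg _ u v) Prod.snd (x', y) L hL
      have heqLL' : ∀ x' : Vg, covD P2 Prod.snd (x', y) L = covD P2 Prod.snd (x', y) L' := by
        intro x'
        rw [hrecL x', hrecL' x']
      -- the minimum over the fibre
      obtain ⟨x₀, -, hx₀⟩ := Finset.exists_min_image Finset.univ
        (fun x' : Vg => covD P2 Prod.snd (x', y) L') Finset.univ_nonempty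
      set m : ℝ≥0∞ := covD P2 Prod.snd (x₀, y) L' with hm
      have hmin : ∀ x' : Vg, m ≤ covD P2 Prod.snd (x', y) L' :=
        fun x' => hx₀ x' (Finset.mem_univ x')
      -- abbreviations
      set A : ℝ≥0∞ := (gdeg G x₀ : ℝ≥0∞) with hA
      set B : ℝ≥0∞ := (gdeg H y : ℝ≥0∞) with hB
      have hDpos : 0 < gdeg G x₀ + gdeg H y := Nat.lt_of_lt_of_le hdH (Nat.le_add_left _ _)
      have hABne : A + B ≠ 0 := by
        rw [hA, hB, ← Nat.cast_add]
        exact_mod_cast hDpos.ne'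
      have hABnt : A + B ≠ ⊤ := by
        rw [hA, hB, ← Nat.cast_add]
        exact ENNReal.natCast_ne_top _
      have hP2val : ∀ q : Vg × Vh, (G.boxProd H).Adj (x₀, y) q →
          ENNReal.ofReal (P2 (x₀, y) q) = (A + B)⁻¹ := by
        intro q hq
        rw [hP2]
        unfold srw
        rw [if_pos hq, gdeg_boxProd]
        rw [ENNReal.ofReal_inv_of_pos (by exact_mod_cast hDpos), ENNReal.ofReal_natCast]
        rw [hA, hB, Nat.cast_add]
      -- neighbour sets
      set NG : Finset Vg := Finset.univ.filter (fun b => G.Adj x₀ b) with hNG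
      set NH : Finset Vh := Finset.univ.filter (fun z => H.Adj y z) with hNH
      set S1 : Finset (Vg × Vh) := NG.image (fun b => (b, y)) with hS1
      set S2 : Finset (Vh) → _ := id
      set SN : ℝ≥0∞ := ∑ z ∈ NH, ET H T z L' with hSN
      -- s and its relation to SN
      set s : ℝ≥0∞ := ∑ y', ENNReal.ofReal (srw H y y') * ET H T y' L' with hs
      have hsrwH : ∀ y', ENNReal.ofReal (srw H y y') * ET H T y' L'
          = if H.Adj y y' then B⁻¹ * ET H T y' L' else 0 := by
        intro y'
        unfold srw
        split
        · congr 1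
          rw [ENNReal.ofReal_inv_of_pos (by exact_mod_cast hdH), ENNReal.ofReal_natCast, hB]
        · simp
      have hsSN : s = B⁻¹ * SN := by
        rw [hs, Finset.sum_congr rfl fun y' _ => hsrwH y', ← Finset.sum_filter, hSN,
          Finset.mul_sum]
      -- SN is finite
      have hSNnt : SN ≠ ⊤ := by
        refine ne_top_of_le_ne_top (b := (NH.card : ℝ≥0∞) * T) ?_ ?_
        · exact ENNReal.mul_ne_top (ENNReal.natCast_ne_top _) (ENNReal.natCast_ne_top _)
        · rw [hSN]
          calc ∑ z ∈ NH, ET H T z L' ≤ ∑ z ∈ NH, (T : ℝ≥0∞) :=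
                Finset.sum_le_sum fun z _ => ET_le H T z L'
            _ = (NH.card : ℝ≥0∞) * T := by rw [Finset.sum_const, nsmul_eq_mul]
      -- c is finite
      have hMHpos : 0 < maxDeg H := Nat.lt_of_lt_of_le hdH (gdeg_le_maxDeg H y)
      have hcnt : c ≠ ⊤ := by
        rw [hc]
        refine ENNReal.add_ne_top.2 ⟨ENNReal.one_ne_top, ?_⟩
        exact (ENNReal.div_lt_top (ENNReal.natCast_ne_top _)
          (by exact_mod_cast hMHpos.ne')).ne
      -- the key lower bound on m
      have hkey : 1 + (A + B)⁻¹ * (A * m + c * SN) ≤ m := by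
        refine le_trans (add_le_add_right ?_ 1) (le_of_eq (hrecL' x₀).symm)
        have hsplit : (A + B)⁻¹ * (A * m + c * SN)
            = (∑ b ∈ NG, (A + B)⁻¹ * m) + (∑ z ∈ NH, (A + B)⁻¹ * (c * ET H T z L')) := by
          have hcard : (NG.card : ℝ≥0∞) = A := by rw [hA, hNG]; unfold gdeg; norm_num
          rw [Finset.sum_const, nsmul_eq_mul, hcard, ← Finset.mul_sum, ← Finset.mul_sum,
            ← hSN]
          ring
        rw [hsplit]
        have hb1 : ∀ b ∈ NG, (A + B)⁻¹ * m
            ≤ ENNReal.ofReal (P2 (x₀, y) (b, y)) * covD P2 Prod.snd (b, y) L' := by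
          intro b hb
          have hadj : (G.boxProd H).Adj (x₀, y) (b, y) :=
            SimpleGraph.boxProd_adj.2 (Or.inl ⟨(Finset.mem_filter.1 hb).2, rfl⟩)
          rw [hP2val _ hadj]
          exact mul_le_mul_right (hmin b) _
        have hb2 : ∀ z ∈ NH, (A + B)⁻¹ * (c * ET H T z L')
            ≤ ENNReal.ofReal (P2 (x₀, y) (x₀, z)) * covD P2 Prod.snd (x₀, z) L' := by
          intro z hz
          have hadj : (G.boxProd H).Adj (x₀, y) (x₀, z) :=
            SimpleGraph.boxProd_adj.2 (Or.inr ⟨(Finset.mem_filter.1 hz).2, rfl⟩)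
          rw [hP2val _ hadj]
          exact mul_le_mul_right (ih L' z x₀) _
        calc (∑ b ∈ NG, (A + B)⁻¹ * m) + (∑ z ∈ NH, (A + B)⁻¹ * (c * ET H T z L'))
            ≤ (∑ b ∈ NG, ENNReal.ofReal (P2 (x₀, y) (b, y)) * covD P2 Prod.snd (b, y) L')
              + (∑ z ∈ NH, ENNReal.ofReal (P2 (x₀, y) (x₀, z)) * covD P2 Prod.snd (x₀, z) L') :=
              add_le_add (Finset.sum_le_sum hb1) (Finset.sum_le_sum hb2)
          _ = (∑ q ∈ NG.image (fun b => (b, y)),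
                ENNReal.ofReal (P2 (x₀, y) q) * covD P2 Prod.snd q L')
              + (∑ q ∈ NH.image (fun z => (x₀, z)),
                ENNReal.ofReal (P2 (x₀, y) q) * covD P2 Prod.snd q L') := by
              rw [Finset.sum_image (fun b _ b' _ h => congrArg Prod.fst h),
                Finset.sum_image (fun z _ z' _ h => congrArg Prod.snd h)]
          _ = ∑ q ∈ NG.image (fun b => (b, y)) ∪ NH.image (fun z => (x₀, z)),
                ENNReal.ofReal (P2 (x₀, y) q) * covD P2 Prod.snd q L' := by
              rw [Finset.sum_union ?_]
              rw [Finset.disjoint_left]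
              rintro q hq1 hq2
              simp only [Finset.mem_image] at hq1 hq2
              rcases hq1 with ⟨b, hb, rfl⟩
              rcases hq2 with ⟨z, hz, heq⟩
              have hzy : z = y := congrArg Prod.snd heq
              rw [hNH] at hz
              exact H.irrefl (hzy ▸ (Finset.mem_filter.1 hz).2)
          _ ≤ ∑ q, ENNReal.ofReal (P2 (x₀, y) q) * covD P2 Prod.snd q L' :=
              Finset.sum_le_sum_of_subset (Finset.subset_univ _)
      -- conclude
      rw [ET, if_neg hL]
      have hgoal : c * (1 + s) ≤ m := by
        rcases eq_or_ne m ⊤ with hmt | hmt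
        · rw [hmt]; exact le_top
        · -- cancel and divide
          have hAm_nt : A * m ≠ ⊤ := ENNReal.mul_ne_top (ENNReal.natCast_ne_top _) hmt
          have hstep1 : (A + B) + (A * m + c * SN) ≤ (A + B) * m := by
            calc (A + B) + (A * m + c * SN)
                = (A + B) * (1 + (A + B)⁻¹ * (A * m + c * SN)) := by
                  rw [mul_add, mul_one, ← mul_assoc, ENNReal.mul_inv_cancel hABne hABnt,
                    one_mul]
              _ ≤ (A + B) * m := mul_le_mul_right hkey _
          have hstep2 : B * m ≥ (A + B) + c * SN := by
            have h1 : A * m + ((A + B) + c * SN) ≤ A * m + B * m := by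
              calc A * m + ((A + B) + c * SN) = (A + B) + (A * m + c * SN) := by ring
                _ ≤ (A + B) * m := hstep1
                _ = A * m + B * m := by ring
            exact (ENNReal.add_le_add_iff_left hAm_nt).1 h1
          have hstep3 : 1 + A / B + c * s ≤ m := by
            have h2 : B⁻¹ * ((A + B) + c * SN) ≤ B⁻¹ * (B * m) :=
              mul_le_mul_right hstep2 _
            rw [← mul_assoc, ENNReal.inv_mul_cancel hBne hBnt, one_mul] at h2
            calc 1 + A / B + c * s = B⁻¹ * ((A + B) + c * SN) := by
                  rw [hsSN, ENNReal.div_eq_inv_mul]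
                  rw [mul_add, mul_add, ENNReal.inv_mul_cancel hBne hBnt]
                  ring
              _ ≤ m := h2
          have hcle : c ≤ 1 + A / B := by
            rw [hc]
            refine add_le_add_right ?_ 1
            refine ENNReal.div_le_div ?_ ?_
            · rw [hA]; exact_mod_cast minDeg_le_gdeg G x₀
            · rw [hB]; exact_mod_cast gdeg_le_maxDeg H y
          calc c * (1 + s) = c + c * s := by rw [mul_add, mul_one]
            _ ≤ (1 + A / B) + c * s := add_le_add_left hcle _
            _ ≤ m := hstep3
      calc c * (1 + s) ≤ m := hgoal
        _ ≤ covD P2 Prod.snd (x, y) L' := hmin x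
        _ = covD P2 Prod.snd (x, y) L := (heqLL' x).symm

end CoverAux5
set_option linter.unusedSectionVars false
set_option linter.unusedVariables false
set_option maxHeartbeats 2000000
noncomputable section CoverAux6
open Finset Classical
open scoped ENNReal

variable {Vg Vh : Type*} [Fintype Vg] [DecidableEq Vg] [Fintype Vh] [DecidableEq Vh]

/-- One-sided bound: the product cover time dominates the slowed-down `H` cover time. -/
lemma coverTime_boxProd_one_side (G : SimpleGraph Vg) (H : SimpleGraph Vh)
    (hG : G.Connected) (hH : H.Connected) :
    (1 + (minDeg G : ℝ≥0∞) / (maxDeg H : ℝ≥0∞)) * coverTime (srw H)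
      ≤ coverTime (srw (G.boxProd H)) := by
  set c : ℝ≥0∞ := 1 + (minDeg G : ℝ≥0∞) / (maxDeg H : ℝ≥0∞) with hc
  have : Nonempty Vg := hG.nonempty
  obtain ⟨x₀⟩ := this
  rw [coverTime, ENNReal.mul_iSup]
  refine iSup_le fun y => ?_
  have h1 : coverTimeFrom (srw H) y = covD (srw H) id y Finset.univ := by
    unfold coverTimeFrom covD
    refine tsum_congr fun t => ?_
    congr 1
    refine eventProb_congr fun f => ?_
    constructor
    · rintro ⟨v, hv⟩; exact ⟨v, Finset.mem_univ v, hv⟩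
    · rintro ⟨w, -, hw⟩; exact ⟨w, hw⟩
  have h2 : covD (srw (G.boxProd H)) Prod.snd (x₀, y) Finset.univ
      ≤ coverTimeFrom (srw (G.boxProd H)) (x₀, y) := by
    unfold coverTimeFrom covD
    refine ENNReal.tsum_le_tsum fun t => ENNReal.ofReal_le_ofReal ?_
    refine eventProb_mono (fun u v => srw_nonneg _ u v) fun f => ?_
    rintro ⟨w, -, hw⟩
    exact ⟨(x₀, w), fun i hc' => hw i (congrArg Prod.snd hc')⟩
  calc c * coverTimeFrom (srw H) y
      = c * ⨆ T, ET H T y Finset.univ := by rw [h1, covD_id_eq_iSup_ET]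
    _ = ⨆ T, c * ET H T y Finset.univ := ENNReal.mul_iSup c _
    _ ≤ covD (srw (G.boxProd H)) Prod.snd (x₀, y) Finset.univ :=
        iSup_le fun T => main_ind G H hG hH T Finset.univ y x₀
    _ ≤ coverTimeFrom (srw (G.boxProd H)) (x₀, y) := h2
    _ ≤ coverTime (srw (G.boxProd H)) := le_iSup _ (x₀, y)

lemma srw_boxProd_swap (G : SimpleGraph Vg) (H : SimpleGraph Vh) (p q : Vh × Vg) :
    srw (H.boxProd G) p q = srw (G.boxProd H) p.swap q.swap := by
  have hadj : (H.boxProd G).Adj p q ↔ (G.boxProd H).Adj p.swap q.swap := by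
    rw [SimpleGraph.boxProd_adj, SimpleGraph.boxProd_adj]
    constructor
    · rintro (⟨h1, h2⟩ | ⟨h1, h2⟩)
      · exact Or.inr ⟨h1, congrArg id h2⟩
      · exact Or.inl ⟨h1, h2⟩
    · rintro (⟨h1, h2⟩ | ⟨h1, h2⟩)
      · exact Or.inr ⟨h1, h2⟩
      · exact Or.inl ⟨h1, h2⟩
  have hdeg : gdeg (H.boxProd G) p = gdeg (G.boxProd H) p.swap := by
    obtain ⟨a, b⟩ := p
    rw [show (a, b).swap = (b, a) from rfl, gdeg_boxProd, gdeg_boxProd, Nat.add_comm]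
  unfold srw
  by_cases h : (H.boxProd G).Adj p q
  · rw [if_pos h, if_pos (hadj.1 h), hdeg]
  · rw [if_neg h, if_neg (fun hc => h (hadj.2 hc))]

lemma coverTimeFrom_boxProd_swap (G : SimpleGraph Vg) (H : SimpleGraph Vh) (p : Vh × Vg) :
    coverTimeFrom (srw (H.boxProd G)) p = coverTimeFrom (srw (G.boxProd H)) p.swap := by
  unfold coverTimeFrom
  refine tsum_congr fun t => ?_
  congr 1
  unfold eventProb
  rw [← Equiv.sum_comp (Equiv.arrowCongr (Equiv.refl (Fin (t+1)))
    (Equiv.prodComm Vg Vh)).symm]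
  refine Finset.sum_congr rfl fun f _ => ?_
  have happ : ∀ i, ((Equiv.arrowCongr (Equiv.refl (Fin (t+1)))
      (Equiv.prodComm Vg Vh)).symm f) i = (f i).swap := fun i => rfl
  have hsw : stepWeight (srw (H.boxProd G)) f
      = stepWeight (srw (G.boxProd H))
        ((Equiv.arrowCongr (Equiv.refl (Fin (t+1))) (Equiv.prodComm Vg Vh)).symm f) := by
    unfold stepWeight
    refine Finset.prod_congr rfl fun i _ => ?_
    rw [happ, happ, srw_boxProd_swap]
  by_cases hcond : f 0 = p ∧ (∃ v, ∀ i, f i ≠ v)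
  · rw [if_pos hcond, if_pos, ← hsw]
    constructor
    · rw [happ 0, hcond.1]
    · obtain ⟨v, hv⟩ := hcond.2
      refine ⟨v.swap, fun i hc => hv i ?_⟩
      rw [happ] at hc
      rw [← Prod.swap_swap (f i), hc, Prod.swap_swap]
  · rw [if_neg hcond, if_neg]
    rintro ⟨h0, v, hv⟩
    refine hcond ⟨?_, ⟨v.swap, fun i hc => hv i (by rw [happ, hc, Prod.swap_swap])⟩⟩
    rw [happ 0] at h0
    exact Prod.swap_injective h0

lemma coverTime_boxProd_swap (G : SimpleGraph Vg) (H : SimpleGraph Vh) :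
    coverTime (srw (H.boxProd G)) = coverTime (srw (G.boxProd H)) := by
  unfold coverTime
  exact Equiv.iSup_congr (Equiv.prodComm Vh Vg)
    (fun p => (coverTimeFrom_boxProd_swap G H p).symm)

end CoverAux6

/-- Let `F = G □ H` be the Cartesian product of two finite, simple,
connected, unweighted, undirected graphs `G` and `H`.  Then
`COV[F] ≥ max{(1 + δ_G/Δ_H)·COV[H], (1 + δ_H/Δ_G)·COV[G]}`. -/
theorem coverTime_boxProd_lower_bound
    {Vg Vh : Type*} [Fintype Vg] [DecidableEq Vg] [Fintype Vh] [DecidableEq Vh]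
    (G : SimpleGraph Vg) (H : SimpleGraph Vh)
    (hG : G.Connected) (hH : H.Connected) :
    max ((1 + (minDeg G : ℝ≥0∞) / (maxDeg H : ℝ≥0∞)) * coverTime (srw H))
        ((1 + (minDeg H : ℝ≥0∞) / (maxDeg G : ℝ≥0∞)) * coverTime (srw G))
      ≤ coverTime (srw (G.boxProd H)) := by
  refine max_le ?_ ?_
  · exact coverTime_boxProd_one_side G H hG hH
  · rw [← coverTime_boxProd_swap G H]
    exact coverTime_boxProd_one_side H G hH hG
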